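/- Let r > 0 and let Ω ⊆ ℝⁿ be closed. Then the following are equivalent: (i) Ω is r-convex; (ii) Ω is convex and for every boundary point x of Ω and every unit normal v to Ω at x, one has Ω ⊆ B̄(x − r·v, r), where B̄(c, r) denotes the closed Euclidean ball of radius r centered at c. -/
import Mathlib


open Filter Metric Set
open scoped Topology RealInnerProductSpace NNReal

/-- A set `Ω` is `r`-convex if for all `x, y ∈ Ω` the intersection of all closed balls of
radius `r` containing both `x` and `y` (taken to be everything if no such ball exists)
is contained in `Ω`. -/
def RConvex {n : ℕ} (r : ℝ) (Ω : Set (EuclideanSpace ℝ (Fin n))) : Prop :=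
  ∀ x ∈ Ω, ∀ y ∈ Ω,
    {z : EuclideanSpace ℝ (Fin n) |
      ∀ c : EuclideanSpace ℝ (Fin n),
        x ∈ closedBall c r → y ∈ closedBall c r → z ∈ closedBall c r} ⊆ Ω

set_option maxHeartbeats 1000000 in
lemma rconvex_key {E : Type*} [NormedAddCommGroup E] [InnerProductSpace ℝ E]
    (r : ℝ) (hr : 0 < r) (u v : E) (hv : ‖v‖ = 1) (hu : u ≠ 0) (hu2 : ‖u‖ ≤ 2 * r)
    (hα : ⟪v, u⟫ ≤ 0) (hfar : r < ‖u + r • v‖) :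
    ∃ w : E, 0 < ⟪v, w⟫ ∧ ∀ d : E, ‖d‖ ≤ r → ‖u - d‖ ≤ r → ‖w - d‖ ≤ r := by
  set α := ⟪v, u⟫ with hαdef
  set U := ‖u‖ ^ 2 with hUdef
  have hU : 0 < U := by
    have : 0 < ‖u‖ := norm_pos_iff.mpr hu
    positivity
  have hvv : ⟪v, v⟫ = 1 := by
    rw [real_inner_self_eq_norm_sq, hv]; norm_num
  have huv : ⟪u, v⟫ = α := real_inner_comm v u
  have hε : 0 < U + 2 * r * α := by
    have h1 : r ^ 2 < ‖u + r • v‖ ^ 2 := by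
      nlinarith [norm_nonneg (u + r • v)]
    have h2 : ‖u + r • v‖ ^ 2 = U + 2 * r * α + r ^ 2 := by
      rw [norm_add_sq_real, real_inner_smul_right, huv, norm_smul, hv,
        Real.norm_eq_abs, abs_of_pos hr]
      ring
    nlinarith
  have habs := abs_real_inner_le_norm v u
  rw [hv, one_mul, ← hαdef] at habs
  obtain ⟨hαm, hαM⟩ := abs_le.mp habs
  set l : ℝ := (U - 2 * r * α) / (4 * r) with hldef
  have hl0 : 0 ≤ l := by
    apply div_nonneg _ (by linarith)
    nlinarith
  have hla : 0 < l + α := by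
    have h : l + α = (U + 2 * r * α) / (4 * r) := by
      rw [hldef]; field_simp; ring
    rw [h]; positivity
  set ε : ℝ := U - 2 * l * r with hεdef
  have hεpos : 0 < ε := by
    have h : ε = (U + 2 * r * α) / 2 := by
      rw [hεdef, hldef]; field_simp; ring
    rw [h]; positivity
  set N : ℝ := ‖l • v + u‖ ^ 2 with hNdef
  have hNval : N = l ^ 2 + 2 * l * α + U := by
    rw [hNdef, norm_add_sq_real, real_inner_smul_left, ← hαdef, norm_smul, hv,
      Real.norm_eq_abs, abs_of_nonneg hl0]
    ring
  have hN : 0 < N := by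
    have hα2 : α ^ 2 ≤ U := by nlinarith
    nlinarith [mul_pos hla hla]
  set s : ℝ := min 1 (ε / N) with hsdef
  have hs0 : 0 < s := lt_min one_pos (div_pos hεpos hN)
  have hs1 : s ≤ 1 := min_le_left _ _
  have hsε : s * N ≤ ε := by
    have := min_le_right 1 (ε / N)
    rw [hsdef]
    calc min 1 (ε / N) * N ≤ (ε / N) * N := by
          apply mul_le_mul_of_nonneg_right this hN.le
      _ = ε := by field_simp
  refine ⟨s • (l • v + u), ?_, ?_⟩
  · have : ⟪v, s • (l • v + u)⟫ = s * (l + α) := by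
      rw [real_inner_smul_right, inner_add_right, real_inner_smul_right, hvv]
      ring
    rw [this]
    exact mul_pos hs0 hla
  · intro d hd hud
    set β := ⟪v, d⟫ with hβdef
    set γ := ⟪u, d⟫ with hγdef
    have hD : ‖d‖ ^ 2 ≤ r ^ 2 := by nlinarith [norm_nonneg d]
    have hγ2 : U + ‖d‖ ^ 2 - r ^ 2 ≤ 2 * γ := by
      have h1 : ‖u - d‖ ^ 2 = U - 2 * γ + ‖d‖ ^ 2 := by
        rw [norm_sub_sq_real, ← hγdef, ← hUdef]
      nlinarith [norm_nonneg (u - d)]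
    have hβr : -r ≤ β := by
      have h := abs_real_inner_le_norm v d
      rw [hv, one_mul] at h
      obtain ⟨h1, _⟩ := abs_le.mp h
      linarith
    have hwd : ‖s • (l • v + u) - d‖ ^ 2
        = s ^ 2 * N - 2 * s * (l * β + γ) + ‖d‖ ^ 2 := by
      rw [norm_sub_sq_real, norm_smul, Real.norm_eq_abs, abs_of_nonneg hs0.le,
        real_inner_smul_left, inner_add_left, real_inner_smul_left,
        ← hβdef, ← hγdef, mul_pow, ← hNdef]
      ring
    have hA : 0 ≤ s * (ε - s * N) := mul_nonneg hs0.le (by nlinarith)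
    have hB : 0 ≤ 2 * s * l * (β + r) :=
      mul_nonneg (by positivity) (by linarith)
    have hC : 0 ≤ s * (2 * γ - (U + ‖d‖ ^ 2 - r ^ 2)) :=
      mul_nonneg hs0.le (by linarith)
    have hDD : 0 ≤ (1 - s) * (r ^ 2 - ‖d‖ ^ 2) :=
      mul_nonneg (by linarith) (by linarith)
    have hsq : ‖s • (l • v + u) - d‖ ^ 2 ≤ r ^ 2 := by
      rw [hwd]
      nlinarith [hA, hB, hC, hDD]
    nlinarith [norm_nonneg (s • (l • v + u) - d), hsq]

set_option maxHeartbeats 1000000 in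
/-- Proposition 2: for a closed set `Ω ⊆ ℝⁿ` and `r > 0`, `Ω` is `r`-convex iff `Ω` is convex
and is contained in the supporting ball `closedBall (x - r • v) r` for every boundary point `x`
and every unit normal `v` to `Ω` at `x`. -/
theorem rConvex_iff_convex_and_supporting_balls {n : ℕ} (r : ℝ) (hr : 0 < r)
    (Ω : Set (EuclideanSpace ℝ (Fin n))) (hΩ : IsClosed Ω) :
    RConvex r Ω ↔
      (Convex ℝ Ω ∧
        ∀ x ∈ frontier Ω, ∀ v : EuclideanSpace ℝ (Fin n), ‖v‖ = 1 →
          (∀ y ∈ Ω, ⟪v, y - x⟫ ≤ 0) → Ω ⊆ closedBall (x - r • v) r) := by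
  constructor
  · intro hrc
    constructor
    · intro x hx y hy a b ha hb hab
      apply hrc x hx y hy
      intro c hxc hyc
      exact convex_closedBall c r hxc hyc ha hb hab
    · intro x hxfr v hv hnormal y hy
      have hxΩ : x ∈ Ω := (frontier_subset_iff_isClosed.mpr hΩ) hxfr
      by_contra hyb
      have hyb' : r < dist y (x - r • v) := lt_of_not_ge (fun h => hyb h)
      set u : EuclideanSpace ℝ (Fin n) := y - x with hudef
      by_cases hu2 : ‖u‖ ≤ 2 * r
      · have hu0 : u ≠ 0 := by
          intro h
          rw [hudef, sub_eq_zero] at h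
          rw [h] at hyb'
          rw [dist_eq_norm] at hyb'
          simp only [sub_sub_cancel, norm_smul, Real.norm_eq_abs, abs_of_pos hr, hv,
            mul_one] at hyb'
          exact lt_irrefl r hyb'
        have hα : ⟪v, u⟫ ≤ 0 := hnormal y hy
        have hfar : r < ‖u + r • v‖ := by
          rw [dist_eq_norm] at hyb'
          have : y - (x - r • v) = u + r • v := by rw [hudef]; abel
          rwa [this] at hyb'
        obtain ⟨w, hw1, hw2⟩ := rconvex_key r hr u v hv hu0 hu2 hα hfar
        have hzΩ : x + w ∈ Ω := by
          apply hrc x hxΩ y hy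
          intro c hxc hyc
          rw [mem_closedBall, dist_eq_norm] at hxc hyc ⊢
          have h1 : ‖c - x‖ ≤ r := by rwa [norm_sub_rev] at hxc
          have h2 : ‖u - (c - x)‖ ≤ r := by
            have : y - c = u - (c - x) := by rw [hudef]; abel
            rwa [this] at hyc
          have := hw2 (c - x) h1 h2
          have heq : x + w - c = w - (c - x) := by abel
          rwa [heq]
        have := hnormal (x + w) hzΩ
        rw [add_sub_cancel_left] at this
        linarith
      · push_neg at hu2
        have hΩuniv : Ω = univ := by
          apply eq_univ_of_forall
          intro z
          apply hrc x hxΩ y hy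
          intro c hxc hyc
          exfalso
          rw [mem_closedBall] at hxc hyc
          have : ‖u‖ ≤ 2 * r := by
            have h := dist_triangle y c x
            rw [hudef]
            calc ‖y - x‖ = dist y x := (dist_eq_norm y x).symm
              _ ≤ dist y c + dist c x := dist_triangle y c x
              _ ≤ r + r := add_le_add hyc (by rwa [dist_comm])
              _ = 2 * r := by ring
          linarith
        rw [hΩuniv] at hxfr
        simp at hxfr
  · rintro ⟨hconv, hsupp⟩ x hx y hy z hz
    by_contra hzΩ
    obtain ⟨p, hpΩ, hp⟩ :=
      exists_norm_eq_iInf_of_complete_convex ⟨x, hx⟩ hΩ.isComplete hconv z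
    have hinner : ∀ w ∈ Ω, ⟪z - p, w - p⟫ ≤ 0 :=
      (norm_eq_iInf_iff_real_inner_le_zero hconv hpΩ).mp hp
    have hzp : z - p ≠ 0 := fun h => hzΩ (by rwa [sub_eq_zero.mp h])
    set R := ‖z - p‖ with hRdef
    have hR : 0 < R := norm_pos_iff.mpr hzp
    set v : EuclideanSpace ℝ (Fin n) := R⁻¹ • (z - p) with hvdef
    have hv : ‖v‖ = 1 := by
      rw [hvdef, norm_smul, Real.norm_eq_abs, abs_of_pos (inv_pos.mpr hR), ← hRdef]
      field_simp
    have hnormal : ∀ w ∈ Ω, ⟪v, w - p⟫ ≤ 0 := by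
      intro w hw
      rw [hvdef, real_inner_smul_left]
      exact mul_nonpos_of_nonneg_of_nonpos (inv_pos.mpr hR).le (hinner w hw)
    have hpfr : p ∈ frontier Ω := by
      rw [frontier_eq_closure_inter_closure, hΩ.closure_eq]
      refine ⟨hpΩ, ?_⟩
      by_contra hpint
      have hpint' : p ∈ interior Ω := by
        rw [closure_compl, mem_compl_iff, not_not] at hpint
        exact hpint
      obtain ⟨δ, hδ, hball⟩ := Metric.isOpen_iff.mp isOpen_interior p hpint'
      have hwΩ : p + (δ / 2) • v ∈ Ω := by
        apply interior_subset
        apply hball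
        rw [mem_ball, dist_eq_norm, add_sub_cancel_left, norm_smul, Real.norm_eq_abs,
          abs_of_pos (by linarith : (0:ℝ) < δ / 2), hv, mul_one]
        linarith
      have := hnormal _ hwΩ
      rw [add_sub_cancel_left, real_inner_smul_right, real_inner_self_eq_norm_sq, hv] at this
      nlinarith
    have hsub := hsupp p hpfr v hv hnormal
    have hzball := hz (p - r • v) (hsub hx) (hsub hy)
    rw [mem_closedBall, dist_eq_norm] at hzball
    have hRv : R • v = z - p := by
      rw [hvdef, smul_smul, mul_inv_cancel₀ hR.ne', one_smul]
    have heq : z - (p - r • v) = (R + r) • v := by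
      rw [add_smul, hRv]
      abel
    rw [heq, norm_smul, Real.norm_eq_abs, abs_of_pos (by linarith), hv, mul_one] at hzball
    linarith
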